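/- arXiv:2101.07416 — 3 statements merged into one kernel-verified Lean document; each statement's English description precedes it below -/
import Mathlib

section
/- Let $l > 0$ and let $\varepsilon$ satisfy $0 \le \varepsilon < 3 - 2\sqrt{2}$ (note $3-2\sqrt{2} = (2-\sqrt{2})/(2+\sqrt{2}) \approx 0.172$). If $a, b \in [(1-\varepsilon)l, (1+\varepsilon)l]$ and $c \in [(1-\varepsilon)\sqrt{2}\,l, (1+\varepsilon)\sqrt{2}\,l]$, then the strict triangle inequalities hold: $a + b > c$, $b + c > a$, and $a + c > b$. -/
/-- Under a deformation rate bound `ε < 3 - 2√2`, two side lengths in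
`[(1-ε)l, (1+ε)l]` and a diagonal length in `[(1-ε)√2 l, (1+ε)√2 l]`
satisfy the strict triangle inequalities. -/
theorem stmt_0 (l ε a b c : ℝ) (hl : 0 < l) (hε0 : 0 ≤ ε)
    (hε1 : ε < 3 - 2 * Real.sqrt 2)
    (ha : a ∈ Set.Icc ((1 - ε) * l) ((1 + ε) * l))
    (hb : b ∈ Set.Icc ((1 - ε) * l) ((1 + ε) * l))
    (hc : c ∈ Set.Icc ((1 - ε) * (Real.sqrt 2 * l)) ((1 + ε) * (Real.sqrt 2 * l))) :
    a + b > c ∧ b + c > a ∧ a + c > b := by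
  obtain ⟨ha1, ha2⟩ := ha
  obtain ⟨hb1, hb2⟩ := hb
  obtain ⟨hc1, hc2⟩ := hc
  have hs : Real.sqrt 2 ^ 2 = 2 := Real.sq_sqrt (by norm_num)
  have hs1 : (1:ℝ) < Real.sqrt 2 := by
    nlinarith [Real.sqrt_nonneg 2]
  have hs2 : Real.sqrt 2 < 2 := by nlinarith [Real.sqrt_nonneg 2]
  refine ⟨?_, ?_, ?_⟩ <;> nlinarith [mul_nonneg hε0 hl.le, mul_pos hl hl, sq_nonneg (Real.sqrt 2 - 1)]
end

section
/- Let $l > 0$ and $0 \le \varepsilon < 3 - 2\sqrt{2}$. Let $x_1, x_2, x_3, x_4 \in \mathbb{R}^2$ be four points such that the four side lengths $\|x_1 - x_2\|, \|x_2 - x_3\|, \|x_3 - x_4\|, \|x_4 - x_1\|$ all lie in $[(1-\varepsilon)l, (1+\varepsilon)l]$ and the two diagonal lengths $\|x_1 - x_3\|, \|x_2 - x_4\|$ both lie in $[(1-\varepsilon)\sqrt{2}\,l, (1+\varepsilon)\sqrt{2}\,l]$. Then the four points are in convex position: no point $x_i$ lies in the convex hull of the other three points. -/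
lemma hull_dist {E : Type*} [SeminormedAddCommGroup E] [NormedSpace ℝ E]
    (a b c q p : E) (hp : p ∈ convexHull ℝ ({a, b, c} : Set E)) :
    dist p q ≤ max (dist a q) (max (dist b q) (dist c q)) := by
  set M := max (dist a q) (max (dist b q) (dist c q)) with hM
  have hsub : ({a, b, c} : Set E) ⊆ Metric.closedBall q M := by
    intro x hx
    rcases hx with rfl | rfl | rfl
    · exact Metric.mem_closedBall.mpr (le_max_left _ _)
    · exact Metric.mem_closedBall.mpr (le_trans (le_max_left _ _) (le_max_right _ _))
    · exact Metric.mem_closedBall.mpr (le_trans (le_max_right _ _) (le_max_right _ _))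
  have := convexHull_min hsub (convex_closedBall q M) hp
  exact Metric.mem_closedBall.mp this

/-- Under the deformation bound `ε < 3 - 2√2`, four points in the plane whose
four side lengths are within `(1±ε)l` and whose two diagonals are within
`(1±ε)√2 l` are in convex position: no point lies in the convex hull of the
other three. -/
theorem stmt_1 (l ε : ℝ) (hl : 0 < l) (hε0 : 0 ≤ ε)
    (hε1 : ε < 3 - 2 * Real.sqrt 2)
    (x₁ x₂ x₃ x₄ : EuclideanSpace ℝ (Fin 2))
    (h12 : ‖x₁ - x₂‖ ∈ Set.Icc ((1 - ε) * l) ((1 + ε) * l))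
    (h23 : ‖x₂ - x₃‖ ∈ Set.Icc ((1 - ε) * l) ((1 + ε) * l))
    (h34 : ‖x₃ - x₄‖ ∈ Set.Icc ((1 - ε) * l) ((1 + ε) * l))
    (h41 : ‖x₄ - x₁‖ ∈ Set.Icc ((1 - ε) * l) ((1 + ε) * l))
    (h13 : ‖x₁ - x₃‖ ∈ Set.Icc ((1 - ε) * (Real.sqrt 2 * l)) ((1 + ε) * (Real.sqrt 2 * l)))
    (h24 : ‖x₂ - x₄‖ ∈ Set.Icc ((1 - ε) * (Real.sqrt 2 * l)) ((1 + ε) * (Real.sqrt 2 * l))) :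
    x₁ ∉ convexHull ℝ ({x₂, x₃, x₄} : Set (EuclideanSpace ℝ (Fin 2))) ∧
    x₂ ∉ convexHull ℝ ({x₁, x₃, x₄} : Set (EuclideanSpace ℝ (Fin 2))) ∧
    x₃ ∉ convexHull ℝ ({x₁, x₂, x₄} : Set (EuclideanSpace ℝ (Fin 2))) ∧
    x₄ ∉ convexHull ℝ ({x₁, x₂, x₃} : Set (EuclideanSpace ℝ (Fin 2))) := by
  have hs2 : (Real.sqrt 2) ^ 2 = 2 := Real.sq_sqrt (by norm_num)
  have hs1 : (1 : ℝ) < Real.sqrt 2 := by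
    nlinarith [Real.sqrt_nonneg 2]
  -- each side is strictly shorter than each diagonal
  have key : (1 + ε) * l < (1 - ε) * (Real.sqrt 2 * l) := by
    have hpos : (0:ℝ) < (Real.sqrt 2 + 1) * l := by positivity
    have h3 : ε * ((Real.sqrt 2 + 1) * l) < (3 - 2 * Real.sqrt 2) * ((Real.sqrt 2 + 1) * l) :=
      mul_lt_mul_of_pos_right hε1 hpos
    nlinarith [hs2, hs1, hl, h3]
  have hside : (0:ℝ) ≤ (1 + ε) * l := by positivity
  -- diagonals measured as distances
  have d13 : (1 + ε) * l < dist x₁ x₃ := by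
    rw [dist_eq_norm]; exact lt_of_lt_of_le key h13.1
  have d24 : (1 + ε) * l < dist x₂ x₄ := by
    rw [dist_eq_norm]; exact lt_of_lt_of_le key h24.1
  have d31 : (1 + ε) * l < dist x₃ x₁ := by rwa [dist_comm]
  have d42 : (1 + ε) * l < dist x₄ x₂ := by rwa [dist_comm]
  -- sides
  have s12 : dist x₁ x₂ ≤ (1 + ε) * l := by rw [dist_eq_norm]; exact h12.2
  have s23 : dist x₂ x₃ ≤ (1 + ε) * l := by rw [dist_eq_norm]; exact h23.2
  have s34 : dist x₃ x₄ ≤ (1 + ε) * l := by rw [dist_eq_norm]; exact h34.2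
  have s41 : dist x₄ x₁ ≤ (1 + ε) * l := by rw [dist_eq_norm]; exact h41.2
  have s21 : dist x₂ x₁ ≤ (1 + ε) * l := by rwa [dist_comm]
  have s32 : dist x₃ x₂ ≤ (1 + ε) * l := by rwa [dist_comm]
  have s43 : dist x₄ x₃ ≤ (1 + ε) * l := by rwa [dist_comm]
  have s14 : dist x₁ x₄ ≤ (1 + ε) * l := by rwa [dist_comm]
  refine ⟨?_, ?_, ?_, ?_⟩
  · intro h
    have := hull_dist x₂ x₃ x₄ x₃ x₁ h
    simp only [dist_self] at this
    have : dist x₁ x₃ ≤ (1 + ε) * l := this.trans (by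
      apply max_le s23; exact max_le hside s43)
    linarith
  · intro h
    have := hull_dist x₁ x₃ x₄ x₄ x₂ h
    simp only [dist_self] at this
    have : dist x₂ x₄ ≤ (1 + ε) * l := this.trans (by
      apply max_le s14; exact max_le s34 hside)
    linarith
  · intro h
    have := hull_dist x₁ x₂ x₄ x₁ x₃ h
    simp only [dist_self] at this
    have : dist x₃ x₁ ≤ (1 + ε) * l := this.trans (by
      apply max_le hside; exact max_le s21 s41)
    linarith
  · intro h
    have := hull_dist x₁ x₂ x₃ x₂ x₄ h
    simp only [dist_self] at this
    have : dist x₄ x₂ ≤ (1 + ε) * l := this.trans (by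
      apply max_le s12; exact max_le hside s32)
    linarith
end

section
/- Let $K > 0$, let $C : \mathbb{R}^n \times \mathbb{R} \to \mathbb{R}^n$ be continuously differentiable, and let $p : \mathbb{R} \to \mathbb{R}^n$ be a differentiable trajectory satisfying $\big(I - \frac{\partial C}{\partial p}(p(t),t)\big)\dot{p}(t) = K\big(C(p(t),t) - p(t)\big) + \frac{\partial C}{\partial t}(p(t),t)$ for all $t \ge 0$ (which holds in particular for the control law $\dot{p} = (I - \frac{\partial C}{\partial p})^{-1}(K(C(p,t)-p) + \frac{\partial C}{\partial t})$ whenever $I - \frac{\partial C}{\partial p}$ is invertible along the trajectory). Then the error $e(t) = C(p(t),t) - p(t)$ satisfies $\dot{e}(t) = -K e(t)$, hence $e(t) = e^{-Kt} e(0)$ and $\|C(p(t),t) - p(t)\|$ converges to zero exponentially with rate $K$. -/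
/-- Exponential convergence to a centroidal configuration: if the trajectory
`p` satisfies `(I - ∂C/∂p)ṗ = K(C(p,t) - p) + ∂C/∂t`, then the error
`e = C(p,t) - p` satisfies `ė = -K e`, hence `e(t) = e^{-Kt} e(0)` and
`‖C(p(t),t) - p(t)‖ → 0` exponentially with rate `K`. -/
theorem stmt_8 (n : ℕ) (K : ℝ) (hK : 0 < K)
    (C : EuclideanSpace ℝ (Fin n) → ℝ → EuclideanSpace ℝ (Fin n))
    (hC : ContDiff ℝ 1 (fun q : EuclideanSpace ℝ (Fin n) × ℝ => C q.1 q.2))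
    (p p' : ℝ → EuclideanSpace ℝ (Fin n))
    (hp : ∀ t, HasDerivAt p (p' t) t)
    (hlaw : ∀ t, 0 ≤ t →
      p' t - fderiv ℝ (fun q => C q t) (p t) (p' t)
        = K • (C (p t) t - p t) + deriv (fun s => C (p t) s) t) :
    (∀ t, 0 ≤ t →
      HasDerivAt (fun s => C (p s) s - p s) (-(K • (C (p t) t - p t))) t) ∧
    (∀ t, 0 ≤ t → C (p t) t - p t = Real.exp (-K * t) • (C (p 0) 0 - p 0)) ∧
    Filter.Tendsto (fun t => ‖C (p t) t - p t‖) Filter.atTop (nhds 0) := by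
  have hF : Differentiable ℝ (fun q : EuclideanSpace ℝ (Fin n) × ℝ => C q.1 q.2) :=
    hC.differentiable one_ne_zero
  set F : EuclideanSpace ℝ (Fin n) × ℝ → EuclideanSpace ℝ (Fin n) :=
    fun q => C q.1 q.2 with hFdef
  have key : ∀ t, 0 ≤ t →
      HasDerivAt (fun s => C (p s) s - p s) (-(K • (C (p t) t - p t))) t := by
    intro t ht
    have hx : HasFDerivAt F (fderiv ℝ F (p t, t)) (p t, t) := (hF _).hasFDerivAt
    have hcurve : HasDerivAt (fun s => (p s, s)) (p' t, 1) t := by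
      exact (hp t).prodMk (hasDerivAt_id t)
    have h1 : HasDerivAt (fun s => C (p s) s) (fderiv ℝ F (p t, t) (p' t, 1)) t := by
      have h0 := hx.comp_hasDerivAt (f := fun s => (p s, s)) t hcurve
      exact h0
    have hincl : HasFDerivAt (fun q : EuclideanSpace ℝ (Fin n) => (q, t))
        ((ContinuousLinearMap.id ℝ (EuclideanSpace ℝ (Fin n))).prod 0) (p t) :=
      (hasFDerivAt_id (p t)).prodMk (hasFDerivAt_const t (p t))
    have hq : HasFDerivAt (fun q => C q t)
        ((fderiv ℝ F (p t, t)).comp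
          ((ContinuousLinearMap.id ℝ (EuclideanSpace ℝ (Fin n))).prod 0)) (p t) :=
      by have := hx.comp (p t) hincl; exact this
    have hqval : fderiv ℝ (fun q => C q t) (p t) (p' t)
        = fderiv ℝ F (p t, t) (p' t, 0) := by
      rw [hq.fderiv]; simp
    have hs : HasDerivAt (fun s => C (p t) s) (fderiv ℝ F (p t, t) (0, 1)) t :=
      hx.comp_hasDerivAt t ((hasDerivAt_const t (p t)).prodMk (hasDerivAt_id t))
    have hsval : deriv (fun s => C (p t) s) t = fderiv ℝ F (p t, t) (0, 1) := hs.deriv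
    have hsplit : fderiv ℝ F (p t, t) (p' t, 1)
        = fderiv ℝ F (p t, t) (p' t, 0) + fderiv ℝ F (p t, t) (0, 1) := by
      rw [← map_add]; norm_num
    have h2 : HasDerivAt (fun s => C (p s) s - p s)
        (fderiv ℝ F (p t, t) (p' t, 1) - p' t) t := h1.sub (hp t)
    have hval : fderiv ℝ F (p t, t) (p' t, 1) - p' t = -(K • (C (p t) t - p t)) := by
      have hl := hlaw t ht
      rw [hqval, hsval] at hl
      rw [hsplit]
      have h4 : fderiv ℝ F (p t, t) (p' t, 0) + fderiv ℝ F (p t, t) (0, 1) - p' t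
          = -(p' t - fderiv ℝ F (p t, t) (p' t, 0)) + fderiv ℝ F (p t, t) (0, 1) := by
        abel
      rw [h4, hl]; abel
    rwa [hval] at h2
  have hpc : Continuous p := continuous_iff_continuousAt.2 fun t => (hp t).continuousAt
  have hec : Continuous (fun s => C (p s) s - p s) := by
    have h1 : Continuous fun s => C (p s) s := by
      exact hC.continuous.comp (hpc.prodMk continuous_id)
    exact h1.sub hpc
  have hg' : ∀ t, 0 ≤ t →
      HasDerivAt (fun s => Real.exp (K * s) • (C (p s) s - p s)) 0 t := by
    intro t ht
    have hexp : HasDerivAt (fun s => Real.exp (K * s)) (K * Real.exp (K * t)) t := by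
      have h1 : HasDerivAt (fun s : ℝ => K * s) K t := by
        simpa using (hasDerivAt_id t).const_mul K
      have h3 := (Real.hasDerivAt_exp (K * t)).comp t h1
      rw [mul_comm] at h3
      exact h3
    have h2 := hexp.smul (key t ht)
    convert h2 using 1
    iterate 4 rfl
    rw [smul_neg, smul_smul]
    module
  have hconst : ∀ t, 0 ≤ t →
      Real.exp (K * t) • (C (p t) t - p t) = Real.exp (K * 0) • (C (p 0) 0 - p 0) := by
    intro t ht
    have hcg : Continuous (fun s => Real.exp (K * s) • (C (p s) s - p s)) :=
      (Real.continuous_exp.comp (continuous_const.mul continuous_id)).smul hec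
    have := constant_of_has_deriv_right_zero (a := 0) (b := t)
      hcg.continuousOn (fun x hx => ((hg' x hx.1).hasDerivWithinAt))
    exact this t ⟨ht, le_rfl⟩
  have hsol : ∀ t, 0 ≤ t → C (p t) t - p t = Real.exp (-K * t) • (C (p 0) 0 - p 0) := by
    intro t ht
    have hg := hconst t ht
    rw [mul_zero, Real.exp_zero, one_smul] at hg
    have h3 : Real.exp (-K * t) • (Real.exp (K * t) • (C (p t) t - p t))
        = Real.exp (-K * t) • (C (p 0) 0 - p 0) := by rw [hg]
    rw [smul_smul, ← Real.exp_add, neg_mul, neg_add_cancel, Real.exp_zero, one_smul] at h3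
    rw [neg_mul]
    exact h3
  refine ⟨key, hsol, ?_⟩
  have hlim : Filter.Tendsto (fun t => Real.exp (-K * t) * ‖C (p 0) 0 - p 0‖)
      Filter.atTop (nhds 0) := by
    have h1 : Filter.Tendsto (fun t : ℝ => -K * t) Filter.atTop Filter.atBot :=
      Filter.Tendsto.const_mul_atTop_of_neg (neg_neg_iff_pos.2 hK) Filter.tendsto_id
    have := (Real.tendsto_exp_atBot.comp h1).mul_const ‖C (p 0) 0 - p 0‖
    simpa using this
  refine hlim.congr' ?_
  filter_upwards [Filter.eventually_ge_atTop (0 : ℝ)] with t ht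
  rw [hsol t ht, norm_smul, Real.norm_eq_abs, abs_of_pos (Real.exp_pos _)]
end
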